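/- (Proposition 2.4, Lipschitz continuity of the phase functional) Let T > 0 and let u : [0,T] → L²(ℝ) be any map with M := sup_{t ∈ [0,T]} ‖u(t)‖_H < ∞. For t ∈ [0,T] and C ∈ ℝ define B(t,C) = ∫_ℝ v'(x + C + ct)·( v(x + C + ct) - v(x + ct) - u(t)(x) ) dx. Then there exists a finite constant L, depending only on ν, b and M, such that |B(t,C₁) - B(t,C₂)| ≤ L·|C₁ - C₂| for all t ∈ [0,T] and all C₁, C₂ ∈ ℝ. -/

import Mathlib

set_option maxHeartbeats 1000000


open Real MeasureTheory Set Metric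

/-- The wave number `k = sqrt(b/(2ν))`. -/
noncomputable def waveK (ν b : ℝ) : ℝ := Real.sqrt (b / (2 * ν))

/-- The travelling wave profile `v(x) = (1 + exp(-k x))⁻¹`. -/
noncomputable def twProfile (ν b : ℝ) (x : ℝ) : ℝ :=
  (1 + Real.exp (-(waveK ν b) * x))⁻¹

/-- The wave speed `c = sqrt(2νb)·(1/2 - a)`. -/
noncomputable def waveSpeed (ν b a : ℝ) : ℝ := Real.sqrt (2 * ν * b) * (1 / 2 - a)


noncomputable def sig (k y : ℝ) : ℝ := (1 + Real.exp (-k * y))⁻¹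
noncomputable def sig1 (k y : ℝ) : ℝ := k * (sig k y * (1 - sig k y))
noncomputable def sig2 (k y : ℝ) : ℝ := k * (sig1 k y * (1 - 2 * sig k y))

lemma one_add_exp_pos (k y : ℝ) : 0 < 1 + Real.exp (-k * y) := by positivity

lemma sig_nonneg (k y : ℝ) : 0 ≤ sig k y := by
  unfold sig; positivity

lemma sig_le_one (k y : ℝ) : sig k y ≤ 1 := by
  unfold sig
  rw [inv_le_one_iff₀]
  right
  nlinarith [Real.exp_pos (-k * y)]

lemma hasDerivAt_sig (k y : ℝ) : HasDerivAt (sig k) (sig1 k y) y := by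
  have h1 : HasDerivAt (fun y : ℝ => 1 + Real.exp (-k * y)) (-k * Real.exp (-k * y)) y := by
    have := ((hasDerivAt_id y).const_mul (-k)).exp
    simpa [mul_comm] using this.const_add 1
  have h2 := h1.inv (ne_of_gt (one_add_exp_pos k y))
  refine h2.congr_deriv ?_
  symm
  have hpos := one_add_exp_pos k y
  unfold sig1 sig
  rw [eq_div_iff (by positivity : ((1:ℝ) + Real.exp (-k * y))^2 ≠ 0)]
  field_simp [hpos.ne']
  ring

lemma hasDerivAt_sig1 (k y : ℝ) : HasDerivAt (sig1 k) (sig2 k y) y := by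
  have h := (((hasDerivAt_sig k y).mul ((hasDerivAt_sig k y).const_sub 1)).const_mul k)
  refine h.congr_deriv ?_
  unfold sig2
  ring

lemma continuous_sig (k : ℝ) : Continuous (sig k) :=
  continuous_iff_continuousAt.mpr fun y => (hasDerivAt_sig k y).continuousAt

lemma continuous_sig1 (k : ℝ) : Continuous (sig1 k) :=
  continuous_iff_continuousAt.mpr fun y => (hasDerivAt_sig1 k y).continuousAt

lemma continuous_sig2 (k : ℝ) : Continuous (sig2 k) := by
  unfold sig2
  exact continuous_const.mul ((continuous_sig1 k).mul
    (continuous_const.sub (continuous_const.mul (continuous_sig k))))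

lemma sig_le_exp (k y : ℝ) : sig k y ≤ Real.exp (k * y) := by
  unfold sig
  rw [show k * y = -(-k * y) by ring, Real.exp_neg]
  have h := Real.exp_pos (-k * y)
  exact inv_anti₀ h (by linarith)

lemma one_sub_sig_le_exp (k y : ℝ) : 1 - sig k y ≤ Real.exp (-k * y) := by
  unfold sig
  have h := one_add_exp_pos k y
  have : 1 - (1 + Real.exp (-k * y))⁻¹ = Real.exp (-k * y) * (1 + Real.exp (-k * y))⁻¹ := by
    field_simp
    ring
  rw [this]
  have h2 : (1 + Real.exp (-k * y))⁻¹ ≤ 1 := by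
    rw [inv_le_one_iff₀]; right; nlinarith [Real.exp_pos (-k * y)]
  nlinarith [Real.exp_pos (-k * y), inv_nonneg.mpr h.le]

lemma sig1_nonneg {k : ℝ} (hk : 0 ≤ k) (y : ℝ) : 0 ≤ sig1 k y := by
  unfold sig1
  have h1 := sig_nonneg k y
  have h2 := sig_le_one k y
  exact mul_nonneg hk (mul_nonneg h1 (by linarith))

lemma sig1_le {k : ℝ} (hk : 0 ≤ k) (y : ℝ) : sig1 k y ≤ k * Real.exp (-(k * |y|)) := by
  unfold sig1
  have h1 := sig_nonneg k y
  have h2 := sig_le_one k y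
  rcases le_or_gt 0 y with hy | hy
  · rw [abs_of_nonneg hy, ← neg_mul]
    have h3 := one_sub_sig_le_exp k y
    have hs : sig k y * (1 - sig k y) ≤ Real.exp (-k * y) := by
      nlinarith [sq_nonneg (1 - sig k y)]
    exact mul_le_mul_of_nonneg_left hs hk
  · rw [abs_of_neg hy]
    have he : -(k * -y) = k * y := by ring
    rw [he]
    have h3 := sig_le_exp k y
    have hs : sig k y * (1 - sig k y) ≤ Real.exp (k * y) := by
      nlinarith [sq_nonneg (sig k y)]
    exact mul_le_mul_of_nonneg_left hs hk

lemma abs_sig2_le {k : ℝ} (hk : 0 ≤ k) (y : ℝ) : |sig2 k y| ≤ k^2 * Real.exp (-(k * |y|)) := by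
  unfold sig2
  have h1 := sig_nonneg k y
  have h2 := sig_le_one k y
  have h3 := sig1_nonneg hk y
  have h4 := sig1_le hk y
  rw [abs_mul, abs_mul, abs_of_nonneg hk, abs_of_nonneg h3]
  have h5 : |1 - 2 * sig k y| ≤ 1 := by rw [abs_le]; constructor <;> nlinarith
  have h6 : k * (sig1 k y * |1 - 2 * sig k y|) ≤ k * (sig1 k y * 1) := by
    apply mul_le_mul_of_nonneg_left _ hk
    exact mul_le_mul_of_nonneg_left h5 h3
  calc k * (sig1 k y * |1 - 2 * sig k y|) ≤ k * sig1 k y := by nlinarith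
    _ ≤ k * (k * Real.exp (-(k * |y|))) := mul_le_mul_of_nonneg_left h4 hk
    _ = k^2 * Real.exp (-(k * |y|)) := by ring

lemma integrable_exp_neg_abs' : Integrable (fun x : ℝ => Real.exp (-|x|)) := by
  have h1 : IntegrableOn (fun x : ℝ => Real.exp (-|x|)) (Ioi 0) := by
    refine (exp_neg_integrableOn_Ioi 0 one_pos).congr_fun ?_ measurableSet_Ioi
    intro x hx
    simp [abs_of_pos (mem_Ioi.mp hx)]
  have h2 : IntegrableOn (fun x : ℝ => Real.exp (-|x|)) (Iic 0) := by
    refine (integrableOn_exp_Iic 0).congr_fun ?_ measurableSet_Iic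
    intro x hx
    simp [abs_of_nonpos (mem_Iic.mp hx)]
  have := h2.union h1
  rwa [Iic_union_Ioi, integrableOn_univ] at this

lemma integrable_exp_neg_mul_abs {k : ℝ} (hk : 0 < k) :
    Integrable (fun x : ℝ => Real.exp (-(k * |x|))) := by
  have h := (integrable_comp_mul_left_iff (fun y : ℝ => Real.exp (-|y|)) hk.ne').mpr
    integrable_exp_neg_abs'
  refine h.congr (Filter.Eventually.of_forall fun x => ?_)
  simp only []
  rw [abs_mul, abs_of_pos hk]

lemma integrable_exp_translate {k : ℝ} (hk : 0 < k) (a : ℝ) :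
    Integrable (fun x : ℝ => Real.exp (-(k * |x + a|))) :=
  (integrable_exp_neg_mul_abs hk).comp_add_right a

lemma integrable_exp_translate_sq {k : ℝ} (hk : 0 < k) (a : ℝ) :
    Integrable (fun x : ℝ => Real.exp (-(k * |x + a|)) ^ 2) := by
  refine (integrable_exp_translate (by linarith : (0:ℝ) < 2 * k) a).congr
    (Filter.Eventually.of_forall fun x => ?_)
  simp only []
  rw [sq, ← Real.exp_add]
  congr 1
  ring

lemma integral_exp_translate {k : ℝ} (a : ℝ) :
    ∫ x : ℝ, Real.exp (-(k * |x + a|)) = ∫ x : ℝ, Real.exp (-(k * |x|)) :=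
  integral_add_right_eq_self (fun y : ℝ => Real.exp (-(k * |y|))) a

lemma integral_exp_translate_sq {k : ℝ} (a : ℝ) :
    ∫ x : ℝ, Real.exp (-(k * |x + a|)) ^ 2 = ∫ x : ℝ, Real.exp (-(k * |x|)) ^ 2 :=
  integral_add_right_eq_self (fun y : ℝ => Real.exp (-(k * |y|)) ^ 2) a


lemma aesm_aux {k : ℝ} (s : ℝ) {w : ℝ → ℝ} (hws : AEStronglyMeasurable w (volume : Measure ℝ))
    (C : ℝ) :
    AEStronglyMeasurable
      (fun x : ℝ => sig k (x + C + s) - sig k (x + s) - w x) (volume : Measure ℝ) := by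
  have h1 : Continuous (fun x : ℝ => sig k (x + C + s) - sig k (x + s)) :=
    ((continuous_sig k).comp (by fun_prop)).sub ((continuous_sig k).comp (by fun_prop))
  exact h1.aestronglyMeasurable.sub hws

lemma core {k : ℝ} (hk : 0 < k) (s : ℝ) {w : ℝ → ℝ} (hw : MemLp w 2 (volume : Measure ℝ))
    (C₀ : ℝ) :
    HasDerivAt (fun C => ∫ x : ℝ, sig1 k (x + C + s) * (sig k (x + C + s) - sig k (x + s) - w x))
      (∫ x : ℝ, sig2 k (x + C₀ + s) * (sig k (x + C₀ + s) - sig k (x + s) - w x)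
        + sig1 k (x + C₀ + s) * sig1 k (x + C₀ + s)) C₀ := by
  have hws : AEStronglyMeasurable w (volume : Measure ℝ) := hw.aestronglyMeasurable
  have hb1 : Integrable (fun x : ℝ => Real.exp (-(k * |x + C₀ + s|))) (volume : Measure ℝ) :=
    (integrable_exp_translate hk (C₀ + s)).congr
      (Filter.Eventually.of_forall fun x => by simp only [add_assoc])
  have hb2 : Integrable (fun x : ℝ => Real.exp (-(k * |x + C₀ + s|)) ^ 2)
      (volume : Measure ℝ) :=
    (integrable_exp_translate_sq hk (C₀ + s)).congr
      (Filter.Eventually.of_forall fun x => by simp only [add_assoc])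
  have hwsq : Integrable (fun x => w x ^ 2) (volume : Measure ℝ) := hw.integrable_sq
  have hm : ∀ (C : ℝ) (x : ℝ), |sig k (x + C + s) - sig k (x + s) - w x| ≤ 2 + |w x| := by
    intro C x
    have a1 := sig_nonneg k (x + C + s); have a2 := sig_le_one k (x + C + s)
    have a3 := sig_nonneg k (x + s); have a4 := sig_le_one k (x + s)
    have h5 : |sig k (x + C + s) - sig k (x + s)| ≤ 1 := by
      rw [abs_le]; constructor <;> linarith
    calc |sig k (x + C + s) - sig k (x + s) - w x|
        ≤ |sig k (x + C + s) - sig k (x + s)| + |w x| := abs_sub _ _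
      _ ≤ 2 + |w x| := by linarith [abs_nonneg (w x)]
  refine (hasDerivAt_integral_of_dominated_loc_of_deriv_le
    (F := fun C x => sig1 k (x + C + s) * (sig k (x + C + s) - sig k (x + s) - w x))
    (F' := fun C x => sig2 k (x + C + s) * (sig k (x + C + s) - sig k (x + s) - w x)
        + sig1 k (x + C + s) * sig1 k (x + C + s))
    (bound := fun x => 2 * k^2 * Real.exp k * Real.exp (-(k * |x + C₀ + s|))
        + (k^4 * Real.exp (2*k) / 2 + k^2 * Real.exp (2*k)) * Real.exp (-(k * |x + C₀ + s|)) ^ 2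
        + w x ^ 2 / 2)
    (s := Metric.ball C₀ 1) (Metric.ball_mem_nhds C₀ one_pos) ?_ ?_ ?_ ?_ ?_ ?_).2
  · -- measurability of F C
    refine Filter.Eventually.of_forall fun C => ?_
    exact ((continuous_sig1 k).comp (by fun_prop)).aestronglyMeasurable.mul (aesm_aux s hws C)
  · -- integrability of F C₀
    refine Integrable.mono'
      ((hb1.const_mul (2*k)).add ((hb2.const_mul (k^2)).add (hwsq.div_const 2)))
      (((continuous_sig1 k).comp (by fun_prop)).aestronglyMeasurable.mul (aesm_aux s hws C₀))
      (Filter.Eventually.of_forall fun x => ?_)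
    have hE₀pos : (0:ℝ) < Real.exp (-(k * |x + C₀ + s|)) := Real.exp_pos _
    have h1 := sig1_nonneg hk.le (x + C₀ + s)
    have h2 := sig1_le hk.le (x + C₀ + s)
    rw [Real.norm_eq_abs, abs_mul, abs_of_nonneg h1]
    calc sig1 k (x + C₀ + s) * |sig k (x + C₀ + s) - sig k (x + s) - w x|
        ≤ (k * Real.exp (-(k * |x + C₀ + s|))) * (2 + |w x|) :=
          mul_le_mul h2 (hm C₀ x) (abs_nonneg _) (by positivity)
      _ ≤ 2*k*Real.exp (-(k * |x + C₀ + s|))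
          + (k^2 * Real.exp (-(k * |x + C₀ + s|))^2 + w x ^ 2 / 2) := by
          nlinarith [sq_nonneg (k * Real.exp (-(k * |x + C₀ + s|)) - |w x|), sq_abs (w x),
            abs_nonneg (w x)]
  · -- measurability of F' C₀
    refine AEStronglyMeasurable.add ?_ ?_
    · exact (((continuous_sig2 k).comp
        (by fun_prop)).aestronglyMeasurable).mul
        (aesm_aux s hws C₀)
    · exact ((((continuous_sig1 k).comp (by continuity : Continuous fun x : ℝ => x + C₀ + s)).mul
        ((continuous_sig1 k).comp (by fun_prop)))).aestronglyMeasurable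
  · -- bound on F' for C in the ball
    refine Filter.Eventually.of_forall fun x => fun C hC => ?_
    have hdist : |x + C₀ + s| - |x + C + s| ≤ 1 := by
      have h := abs_sub_abs_le_abs_sub (x + C₀ + s) (x + C + s)
      have h2 : |(x + C₀ + s) - (x + C + s)| = |C₀ - C| := by ring_nf
      have hC' : |C - C₀| < 1 := by
        have := Metric.mem_ball.mp hC
        rwa [Real.dist_eq] at this
      have h3 : |C₀ - C| ≤ 1 := by rw [abs_sub_comm]; exact hC'.le
      calc |x + C₀ + s| - |x + C + s| ≤ |(x + C₀ + s) - (x + C + s)| := h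
        _ = |C₀ - C| := h2
        _ ≤ 1 := h3
    have hEle : Real.exp (-(k * |x + C + s|))
        ≤ Real.exp k * Real.exp (-(k * |x + C₀ + s|)) := by
      rw [← Real.exp_add]
      apply Real.exp_le_exp.mpr
      nlinarith
    set Eθ := Real.exp (-(k * |x + C + s|)) with hEθdef
    set E₀ := Real.exp (-(k * |x + C₀ + s|)) with hE₀def
    have hEθpos : 0 < Eθ := Real.exp_pos _
    have hE₀pos : 0 < E₀ := Real.exp_pos _
    have hs2 := abs_sig2_le hk.le (x + C + s)
    have hs1 := sig1_le hk.le (x + C + s)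
    have hs1n := sig1_nonneg hk.le (x + C + s)
    have hexp2 : Real.exp (2*k) = Real.exp k * Real.exp k := by
      rw [two_mul, Real.exp_add]
    have hsq : Eθ^2 ≤ (Real.exp k * E₀)^2 := by
      apply pow_le_pow_left₀ hEθpos.le hEle
    rw [Real.norm_eq_abs]
    calc |sig2 k (x + C + s) * (sig k (x + C + s) - sig k (x + s) - w x)
          + sig1 k (x + C + s) * sig1 k (x + C + s)|
        ≤ |sig2 k (x + C + s)| * |sig k (x + C + s) - sig k (x + s) - w x|
          + sig1 k (x + C + s) * sig1 k (x + C + s) := by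
          rw [← abs_mul]
          refine (abs_add_le _ _).trans ?_
          rw [abs_of_nonneg (mul_nonneg hs1n hs1n)]
      _ ≤ (k^2 * Eθ) * (2 + |w x|) + (k * Eθ) * (k * Eθ) := by
          refine add_le_add (mul_le_mul hs2 (hm C x) (abs_nonneg _) (by positivity)) ?_
          exact mul_le_mul hs1 hs1 hs1n (by positivity)
      _ ≤ 2 * k^2 * Real.exp k * E₀
          + (k^4 * Real.exp (2*k) / 2 + k^2 * Real.exp (2*k)) * E₀ ^ 2 + w x ^ 2 / 2 := by
          have hknn : (0:ℝ) ≤ k^2 := sq_nonneg k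
          have hsq' : Eθ^2 ≤ Real.exp (2*k) * E₀^2 := by
            rw [hexp2]; nlinarith [hsq]
          have A1 : k^2 * Eθ ≤ k^2 * (Real.exp k * E₀) :=
            mul_le_mul_of_nonneg_left hEle hknn
          have A2 : k^2 * Eθ * |w x| ≤ k^4 * Eθ^2 / 2 + w x ^ 2 / 2 := by
            nlinarith [sq_nonneg (k^2 * Eθ - |w x|), sq_abs (w x)]
          have A3 : k^4 * Eθ^2 / 2 ≤ k^4 * (Real.exp (2*k) * E₀^2) / 2 := by
            have : (0:ℝ) ≤ k^4 / 2 := by positivity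
            nlinarith [mul_le_mul_of_nonneg_left hsq' this]
          have A4 : k^2 * Eθ^2 ≤ k^2 * (Real.exp (2*k) * E₀^2) :=
            mul_le_mul_of_nonneg_left hsq' hknn
          nlinarith [A1, A2, A3, A4, abs_nonneg (w x)]
  · -- integrability of bound
    exact ((hb1.const_mul _).add (hb2.const_mul _)).add (hwsq.div_const 2)
  · -- differentiability in C
    refine Filter.Eventually.of_forall fun x => fun C _ => ?_
    have hinner : HasDerivAt (fun C : ℝ => x + C + s) 1 C := by
      simpa using ((hasDerivAt_id C).const_add x).add_const s
    have h1 : HasDerivAt (fun C : ℝ => sig1 k (x + C + s)) (sig2 k (x + C + s)) C := by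
      exact ((hasDerivAt_sig1 k (x + C + s)).comp C hinner).congr_deriv (mul_one _)
    have h2 : HasDerivAt (fun C : ℝ => sig k (x + C + s)) (sig1 k (x + C + s)) C := by
      exact ((hasDerivAt_sig k (x + C + s)).comp C hinner).congr_deriv (mul_one _)
    have h3 : HasDerivAt (fun C : ℝ => sig k (x + C + s) - sig k (x + s) - w x)
        (sig1 k (x + C + s)) C := (h2.sub_const _).sub_const _
    exact h1.mul h3

lemma sig_diff_bound (k a b c : ℝ) : |sig k a - sig k b - c| ≤ 2 + |c| := by
  have a1 := sig_nonneg k a; have a2 := sig_le_one k a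
  have a3 := sig_nonneg k b; have a4 := sig_le_one k b
  have h5 : |sig k a - sig k b| ≤ 1 := by rw [abs_le]; constructor <;> linarith
  calc |sig k a - sig k b - c| ≤ |sig k a - sig k b| + |c| := abs_sub _ _
    _ ≤ 2 + |c| := by linarith

lemma deriv_bound {k : ℝ} (hk : 0 < k) (s : ℝ) {w : ℝ → ℝ} (hw : MemLp w 2 (volume : Measure ℝ))
    {M : ℝ} (hM : (∫ x : ℝ, w x ^ 2) ≤ M ^ 2) (C₀ : ℝ) :
    |∫ x : ℝ, sig2 k (x + C₀ + s) * (sig k (x + C₀ + s) - sig k (x + s) - w x)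
        + sig1 k (x + C₀ + s) * sig1 k (x + C₀ + s)|
      ≤ 2 * k^2 * (∫ x : ℝ, Real.exp (-(k * |x|)))
        + (k^4/2 + k^2) * (∫ x : ℝ, Real.exp (-(k * |x|)) ^ 2) + M^2/2 := by
  have hws : AEStronglyMeasurable w (volume : Measure ℝ) := hw.aestronglyMeasurable
  have hb1 : Integrable (fun x : ℝ => Real.exp (-(k * |x + C₀ + s|))) (volume : Measure ℝ) :=
    (integrable_exp_translate hk (C₀ + s)).congr
      (Filter.Eventually.of_forall fun x => by simp only [add_assoc])
  have hb2 : Integrable (fun x : ℝ => Real.exp (-(k * |x + C₀ + s|)) ^ 2)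
      (volume : Measure ℝ) :=
    (integrable_exp_translate_sq hk (C₀ + s)).congr
      (Filter.Eventually.of_forall fun x => by simp only [add_assoc])
  have hwsq : Integrable (fun x => w x ^ 2) (volume : Measure ℝ) := hw.integrable_sq
  have key : ‖∫ x : ℝ, sig2 k (x + C₀ + s) * (sig k (x + C₀ + s) - sig k (x + s) - w x)
        + sig1 k (x + C₀ + s) * sig1 k (x + C₀ + s)‖
      ≤ ∫ x : ℝ, (2 * k^2 * Real.exp (-(k * |x + C₀ + s|))
        + (k^4/2 + k^2) * Real.exp (-(k * |x + C₀ + s|)) ^ 2 + w x ^ 2 / 2) := by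
    refine norm_integral_le_of_norm_le
      (((hb1.const_mul _).add (hb2.const_mul _)).add (hwsq.div_const 2))
      (Filter.Eventually.of_forall fun x => ?_)
    set E₀ := Real.exp (-(k * |x + C₀ + s|)) with hE₀def
    have hE₀pos : 0 < E₀ := Real.exp_pos _
    have hs2 := abs_sig2_le hk.le (x + C₀ + s)
    have hs1 := sig1_le hk.le (x + C₀ + s)
    have hs1n := sig1_nonneg hk.le (x + C₀ + s)
    have hmx := sig_diff_bound k (x + C₀ + s) (x + s) (w x)
    rw [Real.norm_eq_abs]
    calc |sig2 k (x + C₀ + s) * (sig k (x + C₀ + s) - sig k (x + s) - w x)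
          + sig1 k (x + C₀ + s) * sig1 k (x + C₀ + s)|
        ≤ |sig2 k (x + C₀ + s)| * |sig k (x + C₀ + s) - sig k (x + s) - w x|
          + sig1 k (x + C₀ + s) * sig1 k (x + C₀ + s) := by
          rw [← abs_mul]
          refine (abs_add_le _ _).trans ?_
          rw [abs_of_nonneg (mul_nonneg hs1n hs1n)]
      _ ≤ (k^2 * E₀) * (2 + |w x|) + (k * E₀) * (k * E₀) := by
          refine add_le_add (mul_le_mul hs2 hmx (abs_nonneg _) (by positivity)) ?_
          exact mul_le_mul hs1 hs1 hs1n (by positivity)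
      _ ≤ 2 * k^2 * E₀ + (k^4/2 + k^2) * E₀ ^ 2 + w x ^ 2 / 2 := by
          nlinarith [sq_nonneg (k^2 * E₀ - |w x|), sq_abs (w x), abs_nonneg (w x), hE₀pos.le]
  have e1 : (∫ x : ℝ, Real.exp (-(k * |x + C₀ + s|))) = ∫ x : ℝ, Real.exp (-(k * |x|)) := by
    simp_rw [add_assoc]
    exact integral_exp_translate (C₀ + s)
  have e2 : (∫ x : ℝ, Real.exp (-(k * |x + C₀ + s|)) ^ 2)
      = ∫ x : ℝ, Real.exp (-(k * |x|)) ^ 2 := by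
    simp_rw [add_assoc]
    exact integral_exp_translate_sq (C₀ + s)
  rw [Real.norm_eq_abs] at key
  refine key.trans ?_
  have hA1 : Integrable (fun x : ℝ => 2 * k^2 * Real.exp (-(k * |x + C₀ + s|)))
      (volume : Measure ℝ) := hb1.const_mul _
  have hA2 : Integrable (fun x : ℝ => (k^4/2 + k^2) * Real.exp (-(k * |x + C₀ + s|)) ^ 2)
      (volume : Measure ℝ) := hb2.const_mul _
  have hA : Integrable (fun x : ℝ => 2 * k^2 * Real.exp (-(k * |x + C₀ + s|))
      + (k^4/2 + k^2) * Real.exp (-(k * |x + C₀ + s|)) ^ 2) (volume : Measure ℝ) := hA1.add hA2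
  have hA3 : Integrable (fun x : ℝ => w x ^ 2 / 2) (volume : Measure ℝ) := hwsq.div_const 2
  rw [integral_add hA hA3, integral_add hA1 hA2,
    integral_const_mul, integral_const_mul, integral_div, e1, e2]
  linarith

/-- Proposition 2.4: Lipschitz continuity (in the phase variable `C`,
uniformly in `t ∈ [0,T]`) of the phase functional
`B(t,C) = ⟨∂ₓ v(·+C+ct), v(·+C+ct) - v(·+ct) - u(t)⟩_H`, for any family `u(t)`
bounded in `L²(ℝ)` by `M`; the Lipschitz constant `L` depends only on `ν`, `b`, `M`. -/
theorem phase_functional_lipschitz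
    (ν b a : ℝ) (hν : 0 < ν) (hb : 0 < b) (ha : a ∈ Set.Ioo (0 : ℝ) 1)
    (T : ℝ) (hT : 0 < T)
    (u : ℝ → ℝ → ℝ) (M : ℝ)
    (huL2 : ∀ t ∈ Set.Icc (0 : ℝ) T, MemLp (u t) 2 (volume : Measure ℝ))
    (huM : ∀ t ∈ Set.Icc (0 : ℝ) T, Real.sqrt (∫ x : ℝ, (u t x) ^ 2) ≤ M)
    (B : ℝ → ℝ → ℝ)
    (hB : B = fun t C => ∫ x : ℝ,
      deriv (twProfile ν b) (x + C + waveSpeed ν b a * t)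
        * (twProfile ν b (x + C + waveSpeed ν b a * t)
            - twProfile ν b (x + waveSpeed ν b a * t) - u t x)) :
    ∃ L : ℝ, ∀ t ∈ Set.Icc (0 : ℝ) T, ∀ C₁ C₂ : ℝ,
      |B t C₁ - B t C₂| ≤ L * |C₁ - C₂| := by
  set k := waveK ν b with hkdef
  have hk : 0 < k := Real.sqrt_pos.mpr (div_pos hb (by linarith))
  have htw : twProfile ν b = sig k := rfl
  have hdtw : deriv (twProfile ν b) = sig1 k := by
    funext y
    rw [htw]
    exact (hasDerivAt_sig k y).deriv
  refine ⟨2 * k^2 * (∫ x : ℝ, Real.exp (-(k * |x|)))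
      + (k^4/2 + k^2) * (∫ x : ℝ, Real.exp (-(k * |x|)) ^ 2) + M^2/2, ?_⟩
  intro t ht C₁ C₂
  have hw := huL2 t ht
  have hM : (∫ x : ℝ, (u t x) ^ 2) ≤ M ^ 2 := by
    have h1 : 0 ≤ ∫ x : ℝ, (u t x) ^ 2 := integral_nonneg fun x => sq_nonneg _
    have h2 := huM t ht
    have h3 := mul_self_le_mul_self (Real.sqrt_nonneg (∫ x : ℝ, (u t x) ^ 2)) h2
    rw [Real.mul_self_sqrt h1] at h3
    nlinarith
  have hdtw' : deriv (sig k) = sig1 k := funext fun y => (hasDerivAt_sig k y).deriv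
  subst hB
  simp only [hdtw, htw, hdtw']
  set s := waveSpeed ν b a * t with hs
  have hlip := Convex.norm_image_sub_le_of_norm_hasDerivWithin_le
    (f := fun C => ∫ x : ℝ, sig1 k (x + C + s) * (sig k (x + C + s) - sig k (x + s) - u t x))
    (f' := fun C₀ => ∫ x : ℝ, sig2 k (x + C₀ + s) * (sig k (x + C₀ + s) - sig k (x + s) - u t x)
        + sig1 k (x + C₀ + s) * sig1 k (x + C₀ + s))
    (s := Set.univ)
    (fun C _ => (core hk s hw C).hasDerivWithinAt)
    (fun C _ => by
      rw [Real.norm_eq_abs]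
      exact deriv_bound hk s hw hM C)
    convex_univ (Set.mem_univ C₂) (Set.mem_univ C₁)
  simpa [Real.norm_eq_abs] using hlip
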